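/- If there exists a self-complementary t-subset-regular k-uniform hypergraph on n vertices (with t < k < n), then the binomial coefficient C(n − i, k − i) is even for every i with 0 ≤ i ≤ t. -/

import Mathlib

/-- If there exists a self-complementary `t`-subset-regular `k`-uniform
hypergraph on `n` vertices (with `t < k < n`), then `C(n - i, k - i)` is even
for every `i` with `0 ≤ i ≤ t`. -/
theorem choose_even_of_self_complementary_subset_regular
    (n k t : ℕ) (htk : t < k) (hkn : k < n)
    (E : Finset (Finset (Fin n)))
    (huniform : ∀ e ∈ E, e.card = k)
    (hsc : ∃ τ : Equiv.Perm (Fin n), ∀ e : Finset (Fin n), e.card = k →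
      (e ∈ E ↔ e.image τ ∉ E))
    (hreg : ∃ lam : ℕ, ∀ s : Finset (Fin n), s.card = t →
      (E.filter (fun e => s ⊆ e)).card = lam) :
    ∀ i ≤ t, Even ((n - i).choose (k - i)) := by
  obtain ⟨τ, hτ⟩ := hsc
  -- Step 1: the hypergraph is i-subset-regular for every i ≤ t
  have step : ∀ m : ℕ, m + 1 ≤ t →
      (∃ lam : ℕ, ∀ s : Finset (Fin n), s.card = m + 1 →
        (E.filter (fun e => s ⊆ e)).card = lam) →
      (∃ lam : ℕ, ∀ s : Finset (Fin n), s.card = m →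
        (E.filter (fun e => s ⊆ e)).card = lam) := by
    intro m hm ⟨lam', hlam'⟩
    have hmk : m < k := by omega
    have count : ∀ s : Finset (Fin n), s.card = m →
        (E.filter (fun e => s ⊆ e)).card * (k - m) = (n - m) * lam' := by
      intro s hs
      have h1 : ∑ x ∈ sᶜ, (E.filter (fun e => insert x s ⊆ e)).card
          = (n - m) * lam' := by
        rw [Finset.sum_congr rfl (fun x hx => hlam' (insert x s)
          (by rw [Finset.card_insert_of_notMem (Finset.mem_compl.mp hx), hs]))]
        rw [Finset.sum_const, smul_eq_mul, Finset.card_compl, hs, Fintype.card_fin]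
      have h2 : ∑ x ∈ sᶜ, (E.filter (fun e => insert x s ⊆ e)).card
          = (E.filter (fun e => s ⊆ e)).card * (k - m) := by
        calc ∑ x ∈ sᶜ, (E.filter (fun e => insert x s ⊆ e)).card
            = ∑ x ∈ sᶜ, ∑ e ∈ E, if insert x s ⊆ e then 1 else 0 :=
              Finset.sum_congr rfl fun x _ => Finset.card_filter _ _
          _ = ∑ e ∈ E, ∑ x ∈ sᶜ, if insert x s ⊆ e then 1 else 0 :=
              Finset.sum_comm
          _ = ∑ e ∈ E, if s ⊆ e then (k - m) else 0 := by
              refine Finset.sum_congr rfl fun e he => ?_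
              rw [← Finset.card_filter]
              by_cases hse : s ⊆ e
              · rw [if_pos hse]
                have heq : sᶜ.filter (fun x => insert x s ⊆ e) = e \ s := by
                  ext x
                  simp only [Finset.mem_filter, Finset.mem_compl,
                    Finset.insert_subset_iff, Finset.mem_sdiff]
                  tauto
                rw [heq, Finset.card_sdiff_of_subset hse, huniform e he, hs]
              · rw [if_neg hse]
                have heq : sᶜ.filter (fun x => insert x s ⊆ e) = ∅ := by
                  refine Finset.filter_false_of_mem fun x hx hsub => ?_
                  exact hse ((Finset.subset_insert x s).trans hsub)
                rw [heq, Finset.card_empty]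
          _ = (E.filter (fun e => s ⊆ e)).card * (k - m) := by
              rw [← Finset.sum_filter, Finset.sum_const, smul_eq_mul]
      omega
    obtain ⟨s₀, -, hs₀⟩ := Finset.exists_subset_card_eq (s := (Finset.univ : Finset (Fin n))) (n := m)
      (by rw [Finset.card_univ, Fintype.card_fin]; omega)
    refine ⟨(E.filter (fun e => s₀ ⊆ e)).card, fun s hs => ?_⟩
    have h1 := count s hs
    have h2 := count s₀ hs₀
    have hk : 0 < k - m := by omega
    exact Nat.eq_of_mul_eq_mul_right hk (by omega)
  have key : ∀ j : ℕ, j ≤ t → ∃ lam : ℕ, ∀ s : Finset (Fin n), s.card = t - j →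
      (E.filter (fun e => s ⊆ e)).card = lam := by
    intro j
    induction j with
    | zero => intro _; simpa using hreg
    | succ j ih =>
      intro hj
      have h' := ih (by omega)
      have heq : t - j = (t - (j + 1)) + 1 := by omega
      rw [heq] at h'
      exact step _ (by omega) h'
  -- Step 2
  intro i hi
  obtain ⟨lam, hlam⟩ := by
    have := key (t - i) (by omega)
    rwa [Nat.sub_sub_self hi] at this
  obtain ⟨s, -, hs⟩ := Finset.exists_subset_card_eq (s := (Finset.univ : Finset (Fin n))) (n := i)
    (by rw [Finset.card_univ, Fintype.card_fin]; omega)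
  set K : Finset (Finset (Fin n)) :=
    (Finset.powersetCard k (Finset.univ : Finset (Fin n))).filter (fun e => s ⊆ e) with hKdef
  have hmemK : ∀ e : Finset (Fin n), e ∈ K ↔ e.card = k ∧ s ⊆ e := by
    intro e
    simp [hKdef, Finset.mem_powersetCard_univ]
  -- cardinality of K
  have hKcard : K.card = (n - i).choose (k - i) := by
    have hbij : K.card = (Finset.powersetCard (k - i) sᶜ).card := by
      refine Finset.card_bij' (fun e _ => e \ s) (fun u _ => u ∪ s) ?_ ?_ ?_ ?_
      · intro e he
        rw [hmemK] at he
        rw [Finset.mem_powersetCard]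
        constructor
        · intro x hx
          simp only [Finset.mem_sdiff] at hx
          simp [hx.2]
        · rw [Finset.card_sdiff_of_subset he.2, he.1, hs]
      · intro u hu
        rw [Finset.mem_powersetCard] at hu
        rw [hmemK]
        have hdisj : Disjoint u s := by
          refine Finset.disjoint_left.mpr fun x hx hxs => ?_
          have := hu.1 hx
          simp at this
          exact this hxs
        constructor
        · rw [Finset.card_union_of_disjoint hdisj, hu.2, hs]
          omega
        · exact Finset.subset_union_right
      · intro e he
        rw [hmemK] at he
        show e \ s ∪ s = e
        exact Finset.sdiff_union_of_subset he.2
      · intro u hu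
        rw [Finset.mem_powersetCard] at hu
        have hdisj : Disjoint u s := by
          refine Finset.disjoint_left.mpr fun x hx hxs => ?_
          have := hu.1 hx
          simp at this
          exact this hxs
        show (u ∪ s) \ s = u
        rw [Finset.union_sdiff_distrib, Finset.sdiff_self, Finset.union_empty,
          Finset.sdiff_eq_self_of_disjoint hdisj]
    rw [hbij, Finset.card_powersetCard, Finset.card_compl, hs, Fintype.card_fin]
  -- split K
  have hsplit : (K.filter (fun e => e ∈ E)).card + (K.filter (fun e => e ∉ E)).card
      = K.card := Finset.card_filter_add_card_filter_not (fun e => e ∈ E)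
  -- in-part
  have hA : (K.filter (fun e => e ∈ E)).card = lam := by
    have : K.filter (fun e => e ∈ E) = E.filter (fun e => s ⊆ e) := by
      ext e
      simp only [Finset.mem_filter, hmemK]
      constructor
      · rintro ⟨⟨_, h2⟩, h3⟩; exact ⟨h3, h2⟩
      · rintro ⟨h1, h2⟩; exact ⟨⟨huniform e h1, h2⟩, h1⟩
    rw [this, hlam s hs]
  -- out-part via τ
  have hB : (K.filter (fun e => e ∉ E)).card = lam := by
    have hs' : (s.image τ.symm).card = i := by
      rw [Finset.card_image_of_injective _ τ.symm.injective, hs]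
    have hbij : (K.filter (fun e => e ∉ E)).card
        = (E.filter (fun e => s.image τ.symm ⊆ e)).card := by
      refine Finset.card_bij' (fun f _ => f.image τ.symm) (fun e _ => e.image τ) ?_ ?_ ?_ ?_
      · intro f hf
        simp only [Finset.mem_filter, hmemK] at hf
        obtain ⟨⟨hfk, hsf⟩, hfE⟩ := hf
        have hgk : (f.image τ.symm).card = k := by
          rw [Finset.card_image_of_injective _ τ.symm.injective, hfk]
        have hcanc : (f.image τ.symm).image τ = f := by
          rw [Finset.image_image]
          simp
        rw [Finset.mem_filter]
        refine ⟨?_, Finset.image_subset_image hsf⟩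
        have := hτ _ hgk
        rw [hcanc] at this
        exact this.mpr hfE
      · intro e he
        simp only [Finset.mem_filter] at he
        obtain ⟨heE, hse⟩ := he
        have hek := huniform e heE
        have hfk : (e.image τ).card = k := by
          rw [Finset.card_image_of_injective _ τ.injective, hek]
        simp only [Finset.mem_filter, hmemK]
        refine ⟨⟨hfk, ?_⟩, ?_⟩
        · have := Finset.image_subset_image (f := τ) hse
          rwa [Finset.image_image, show (⇑τ ∘ ⇑τ.symm) = id from funext fun x => τ.apply_symm_apply x, Finset.image_id] at this
        · exact (hτ e hek).mp heE
      · intro f hf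
        show (f.image τ.symm).image τ = f
        rw [Finset.image_image]
        simp
      · intro e he
        show (e.image τ).image τ.symm = e
        rw [Finset.image_image]
        simp
    rw [hbij, hlam _ hs']
  refine ⟨lam, ?_⟩
  omega
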